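/- Let M = (M_p)_{p∈ℕ} be a sequence of positive reals, m_p := M_p/p!, μ_p := M_p/M_{p−1}. Then the following are equivalent: (i) there exists H ≥ 1 such that (m_{p+1})^{1/(p+1)} ≤ H^{1/(p+1)} (m_p)^{1/p} for all p ≥ 1; (ii) there exists A ≥ 1 such that μ_{p+1} ≤ A (M_p)^{1/p} for all p ≥ 1. Moreover, (i) with constant H implies (ii) with A = 2eH, and (ii) with constant A implies (i) with H = A. -/

import Mathlib

private lemma aux_rpow_inv {x : ℝ} (hx : 0 ≤ x) {p : ℕ} (hp : 1 ≤ p) :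
    (x ^ p) ^ ((1:ℝ)/p) = x := by
  have hp0 : ((p:ℝ)) ≠ 0 := by
    have : (0:ℝ) < p := by exact_mod_cast hp
    exact ne_of_gt this
  rw [← Real.rpow_natCast x p, ← Real.rpow_mul hx, mul_one_div, div_self hp0, Real.rpow_one]

private lemma key1 (p : ℕ) (hp : 1 ≤ p) :
    ((p:ℝ)+1) ≤ 2 * Real.exp 1 * ((p.factorial : ℝ)) ^ ((1:ℝ)/p) := by
  have hp0 : (0:ℝ) < p := by exact_mod_cast hp
  have hfac : (0:ℝ) < (p.factorial : ℝ) := by exact_mod_cast p.factorial_pos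
  have h1 : ((p:ℝ))^p / (p.factorial:ℝ) ≤ Real.exp p :=
    Real.pow_div_factorial_le_exp (p:ℝ) hp0.le p
  have h2 : ((p:ℝ))^p ≤ (Real.exp 1)^p * (p.factorial:ℝ) := by
    have h := (div_le_iff₀ hfac).mp h1
    rwa [← Real.exp_one_rpow (p:ℝ), Real.rpow_natCast] at h
  have hp2 : ((p:ℝ)+1) ≤ 2*(p:ℝ) := by
    have : (1:ℝ) ≤ p := by exact_mod_cast hp
    linarith
  have h3 : ((p:ℝ)+1)^p ≤ (2*Real.exp 1)^p * (p.factorial:ℝ) := by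
    calc ((p:ℝ)+1)^p ≤ (2*(p:ℝ))^p := pow_le_pow_left₀ (by positivity) hp2 p
      _ = 2^p * (p:ℝ)^p := mul_pow _ _ _
      _ ≤ 2^p * ((Real.exp 1)^p * (p.factorial:ℝ)) :=
          mul_le_mul_of_nonneg_left h2 (by positivity)
      _ = (2*Real.exp 1)^p * (p.factorial:ℝ) := by rw [mul_pow]; ring
  have h4 := Real.rpow_le_rpow (by positivity) h3 (by positivity : (0:ℝ) ≤ 1/p)
  rwa [aux_rpow_inv (by positivity) hp,
    Real.mul_rpow (by positivity) (by positivity),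
    aux_rpow_inv (by positivity) hp] at h4

private lemma key2 (p : ℕ) (hp : 1 ≤ p) :
    ((p.factorial : ℝ)) ^ ((1:ℝ)/p) ≤ (p:ℝ)+1 := by
  have h : (p.factorial : ℝ) ≤ ((p:ℝ)+1)^p := by
    calc (p.factorial:ℝ) ≤ ((p:ℝ))^p := by exact_mod_cast Nat.factorial_le_pow p
      _ ≤ ((p:ℝ)+1)^p := pow_le_pow_left₀ (by positivity) (by linarith) p
  have h4 := Real.rpow_le_rpow (by positivity) h (by positivity : (0:ℝ) ≤ 1/p)
  rwa [aux_rpow_inv (by positivity) hp] at h4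

/-- For a positive sequence M with m_p = M_p/p! and μ_p = M_p/M_{p−1}, the
conditions (i) ∃ H ≥ 1, (m_{p+1})^{1/(p+1)} ≤ H^{1/(p+1)}(m_p)^{1/p} for all p ≥ 1 and
(ii) ∃ A ≥ 1, μ_{p+1} ≤ A·(M_p)^{1/p} for all p ≥ 1 are equivalent; quantitatively (i)
with H gives (ii) with A = 2eH and (ii) with A gives (i) with H = A. -/
theorem stmt9 (M : ℕ → ℝ) (hpos : ∀ p, 0 < M p) :
    (∀ H : ℝ, 1 ≤ H →
      (∀ p : ℕ, 1 ≤ p →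
        (M (p + 1) / (Nat.factorial (p + 1) : ℝ)) ^ ((1 : ℝ) / (p + 1))
          ≤ H ^ ((1 : ℝ) / (p + 1)) * (M p / (Nat.factorial p : ℝ)) ^ ((1 : ℝ) / p)) →
      (∀ p : ℕ, 1 ≤ p →
        M (p + 1) / M p ≤ (2 * Real.exp 1 * H) * (M p) ^ ((1 : ℝ) / p))) ∧
    (∀ A : ℝ, 1 ≤ A →
      (∀ p : ℕ, 1 ≤ p → M (p + 1) / M p ≤ A * (M p) ^ ((1 : ℝ) / p)) →
      (∀ p : ℕ, 1 ≤ p →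
        (M (p + 1) / (Nat.factorial (p + 1) : ℝ)) ^ ((1 : ℝ) / (p + 1))
          ≤ A ^ ((1 : ℝ) / (p + 1)) * (M p / (Nat.factorial p : ℝ)) ^ ((1 : ℝ) / p))) := by
  constructor
  · -- (i) ⇒ (ii)
    intro H hH hi p hp
    have hMp := hpos p
    have hMp1 := hpos (p+1)
    have hH0 : (0:ℝ) < H := lt_of_lt_of_le one_pos hH
    have hp0 : (0:ℝ) < p := by exact_mod_cast hp
    have hp1 : (0:ℝ) < (p:ℝ) + 1 := by positivity
    have hfacp : (0:ℝ) < (p.factorial : ℝ) := by exact_mod_cast p.factorial_pos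
    have hfacp1 : (0:ℝ) < ((p+1).factorial : ℝ) := by exact_mod_cast (p+1).factorial_pos
    set a := M p / (Nat.factorial p : ℝ) with ha
    set b := M (p+1) / (Nat.factorial (p+1) : ℝ) with hb
    have hapos : 0 < a := div_pos (hpos p) hfacp
    have hbpos : 0 < b := div_pos (hpos (p+1)) hfacp1
    have hcpos : (0:ℝ) < (p.factorial:ℝ) ^ ((1:ℝ)/p) := by positivity
    have hstep : b ≤ H * (a * a ^ ((1:ℝ)/p)) := by
      have h2 := Real.rpow_le_rpow (by positivity) (hi p hp) hp1.le
      rw [← Real.rpow_mul hbpos.le, one_div_mul_cancel hp1.ne', Real.rpow_one,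
          Real.mul_rpow (by positivity) (by positivity),
          ← Real.rpow_mul hH0.le, one_div_mul_cancel hp1.ne', Real.rpow_one,
          ← Real.rpow_mul hapos.le] at h2
      have hexp : (1:ℝ)/p * ((p:ℝ)+1) = 1 + 1/p := by field_simp
      rwa [hexp, Real.rpow_add hapos, Real.rpow_one] at h2
    have hpa : (p.factorial:ℝ) * a = M p := by
      rw [ha]; field_simp
    have hca : (p.factorial:ℝ) ^ ((1:ℝ)/p) * a ^ ((1:ℝ)/p) = M p ^ ((1:ℝ)/p) := by
      rw [ha, Real.div_rpow (hpos p).le hfacp.le, mul_comm,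
        div_mul_cancel₀ _ (ne_of_gt hcpos)]
    have hM1 : M (p+1) = ((Nat.factorial (p+1)) : ℝ) * b := by
      rw [hb]; field_simp
    have hfaceq : ((Nat.factorial (p+1) : ℕ) : ℝ) = ((p:ℝ)+1) * (p.factorial:ℝ) := by
      rw [Nat.factorial_succ]; push_cast; ring
    rw [div_le_iff₀ (hpos p)]
    calc M (p+1) = (((p:ℝ)+1) * (p.factorial:ℝ)) * b := by rw [hM1, hfaceq]
      _ ≤ (((p:ℝ)+1) * (p.factorial:ℝ)) * (H * (a * a ^ ((1:ℝ)/p))) :=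
          mul_le_mul_of_nonneg_left hstep (by positivity)
      _ = ((p:ℝ)+1) * H * ((p.factorial:ℝ) * a) * a ^ ((1:ℝ)/p) := by ring
      _ = ((p:ℝ)+1) * H * M p * a ^ ((1:ℝ)/p) := by rw [hpa]
      _ ≤ (2 * Real.exp 1 * ((p.factorial:ℝ) ^ ((1:ℝ)/p))) * H * M p * a ^ ((1:ℝ)/p) := by
          have h5 : ((p:ℝ)+1) * H * M p
              ≤ (2 * Real.exp 1 * ((p.factorial:ℝ) ^ ((1:ℝ)/p))) * H * M p := by
            apply mul_le_mul_of_nonneg_right _ (hpos p).le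
            exact mul_le_mul_of_nonneg_right (key1 p hp) hH0.le
          exact mul_le_mul_of_nonneg_right h5 (by positivity)
      _ = 2 * Real.exp 1 * H * M p
            * ((p.factorial:ℝ) ^ ((1:ℝ)/p) * a ^ ((1:ℝ)/p)) := by ring
      _ = 2 * Real.exp 1 * H * M p ^ ((1:ℝ)/p) * M p := by rw [hca]; ring
  · -- (ii) ⇒ (i)
    intro A hA hii p hp
    have hMp := hpos p
    have hMp1 := hpos (p+1)
    have hA0 : (0:ℝ) < A := lt_of_lt_of_le one_pos hA
    have hp0 : (0:ℝ) < p := by exact_mod_cast hp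
    have hp1 : (0:ℝ) < (p:ℝ) + 1 := by positivity
    have hfacp : (0:ℝ) < (p.factorial : ℝ) := by exact_mod_cast p.factorial_pos
    have hfacp1 : (0:ℝ) < ((p+1).factorial : ℝ) := by exact_mod_cast (p+1).factorial_pos
    set a := M p / (Nat.factorial p : ℝ) with ha
    set b := M (p+1) / (Nat.factorial (p+1) : ℝ) with hb
    have hapos : 0 < a := div_pos (hpos p) hfacp
    have hbpos : 0 < b := div_pos (hpos (p+1)) hfacp1
    have hcpos : (0:ℝ) < (p.factorial:ℝ) ^ ((1:ℝ)/p) := by positivity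
    have hMM : M (p+1) ≤ A * M p ^ ((1:ℝ)/p) * M p :=
      (div_le_iff₀ (hpos p)).mp (hii p hp)
    have hfaceq : ((Nat.factorial (p+1) : ℕ) : ℝ) = ((p:ℝ)+1) * (p.factorial:ℝ) := by
      rw [Nat.factorial_succ]; push_cast; ring
    have hden : (p.factorial:ℝ) * ((p.factorial:ℝ) ^ ((1:ℝ)/p))
        ≤ ((Nat.factorial (p+1) : ℕ) : ℝ) := by
      rw [hfaceq, mul_comm ((p:ℝ)+1)]
      exact mul_le_mul_of_nonneg_left (key2 p hp) hfacp.le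
    have hkey : b ≤ A * (a * a ^ ((1:ℝ)/p)) := by
      have h1 : b ≤ (A * M p ^ ((1:ℝ)/p) * M p)
          / ((p.factorial:ℝ) * ((p.factorial:ℝ) ^ ((1:ℝ)/p))) := by
        rw [hb]
        exact div_le_div₀ (by positivity) hMM (by positivity) hden
      have h2 : A * (a * a ^ ((1:ℝ)/p)) = (A * M p ^ ((1:ℝ)/p) * M p)
          / ((p.factorial:ℝ) * ((p.factorial:ℝ) ^ ((1:ℝ)/p))) := by
        rw [ha, Real.div_rpow (hpos p).le hfacp.le]
        field_simp
      rw [h2]; exact h1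
    have h3 := Real.rpow_le_rpow hbpos.le hkey (by positivity : (0:ℝ) ≤ 1/((p:ℝ)+1))
    rw [Real.mul_rpow hA0.le (by positivity)] at h3
    have h4 : a * a ^ ((1:ℝ)/p) = a ^ ((1:ℝ) + 1/p) := by
      rw [Real.rpow_add hapos, Real.rpow_one]
    rw [h4, ← Real.rpow_mul hapos.le] at h3
    have he : ((1:ℝ) + 1/p) * (1/((p:ℝ)+1)) = 1/p := by
      field_simp
    rwa [he] at h3
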